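/- Let s ∈ ℂ with Re s < 0 and w := e^s. For each n ∈ ℕ the series b_n := Σ_{k≥0} k^n w^k converges absolutely. Let d := dist(s, 2πiℤ) > 0. Then the power series Σ_{n≥0} (−1)^n b_n ζ^n/n! has radius of convergence exactly d, and for every ζ ∈ ℂ with |ζ| < d one has Σ_{n≥0} (−1)^n b_n ζ^n/n! = 1/(1 − e^{s−ζ}). -/

import Mathlib

open Complex Metric Filter Topology
open scoped ENNReal NNReal


/-- The lattice `2πiℤ ⊆ ℂ`. -/
def twoPiIZ : Set ℂ :=
  Set.range (fun m : ℤ => ((2 * Real.pi : ℝ) : ℂ) * Complex.I * (m : ℂ))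


noncomputable def borelCoeff (s : ℂ) (n : ℕ) : ℂ :=
  (-1) ^ n * (∑' k : ℕ, (k : ℂ) ^ n * Complex.exp s ^ k) / (Nat.factorial n : ℂ)

lemma norm_exp_lt_one {s : ℂ} (hs : s.re < 0) : ‖Complex.exp s‖ < 1 := by
  rw [show ‖Complex.exp s‖ = Real.exp s.re from Complex.norm_exp s]
  exact Real.exp_lt_one_iff.2 hs

lemma summable_bn {s : ℂ} (hs : s.re < 0) (n : ℕ) :
    Summable (fun k : ℕ => ‖(k : ℂ) ^ n * Complex.exp s ^ k‖) := by
  have h := summable_pow_mul_geometric_of_norm_lt_one (R := ℝ) n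
    (r := ‖Complex.exp s‖) (by
      rw [Real.norm_eq_abs, _root_.abs_of_nonneg (norm_nonneg _)]
      exact norm_exp_lt_one hs)
  refine h.congr fun k => ?_
  simp [norm_mul, norm_pow]

lemma key {s : ℂ} (hs : s.re < 0) {ζ : ℂ} (hζ : s.re + ‖ζ‖ < 0) :
    Summable (fun n : ℕ => ‖borelCoeff s n * ζ ^ n‖) ∧
    HasSum (fun n : ℕ => borelCoeff s n * ζ ^ n) ((1 - Complex.exp (s - ζ))⁻¹) := by
  set w : ℂ := Complex.exp s with hw
  set F : ℕ × ℕ → ℂ := fun p => (-ζ) ^ p.2 * ((p.1 : ℂ) ^ p.2 * w ^ p.1) / (p.2.factorial : ℂ)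
    with hF
  have hwnorm : ‖w‖ = Real.exp s.re := Complex.norm_exp s
  have hFnorm : ∀ k n : ℕ, ‖F (k, n)‖ = ‖w‖ ^ k * (((k : ℝ) * ‖ζ‖) ^ n / n.factorial) := by
    intro k n
    simp only [hF, norm_div, norm_mul, norm_pow, norm_neg, Complex.norm_natCast, mul_pow]
    ring
  -- summability of the norms over the product
  have hGsum : Summable (fun p : ℕ × ℕ => ‖F p‖) := by
    refine (summable_prod_of_nonneg fun p => norm_nonneg _).2 ⟨fun k => ?_, ?_⟩
    · refine ((Real.summable_pow_div_factorial ((k : ℝ) * ‖ζ‖)).mul_left (‖w‖ ^ k)).congr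
        fun n => (hFnorm k n).symm
    · have hlt : ‖w‖ * Real.exp ‖ζ‖ < 1 := by
        rw [hwnorm, ← Real.exp_add]
        exact Real.exp_lt_one_iff.2 hζ
      refine (summable_geometric_of_lt_one (by positivity) hlt).congr fun k => ?_
      have : ∀ n : ℕ, ‖F (k, n)‖ = ‖w‖ ^ k * (((k : ℝ) * ‖ζ‖) ^ n / n.factorial) := hFnorm k
      rw [tsum_congr this, tsum_mul_left,
        show (∑' n : ℕ, ((k : ℝ) * ‖ζ‖) ^ n / n.factorial) = Real.exp ((k : ℝ) * ‖ζ‖) by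
          rw [Real.exp_eq_exp_ℝ, NormedSpace.exp_eq_tsum_div],
        Real.exp_nat_mul, mul_pow]
  have hFsum : Summable F := Summable.of_norm hGsum
  -- inner summability in k for fixed n
  have sK : ∀ n : ℕ, Summable (fun k : ℕ => (k : ℂ) ^ n * w ^ k) :=
    fun n => Summable.of_norm (summable_bn hs n)
  have hcol : ∀ n : ℕ, Summable (fun k : ℕ => F (k, n)) := by
    intro n
    refine ((sK n).mul_left ((-ζ) ^ n / (n.factorial : ℂ))).congr fun k => ?_
    simp only [hF]; ring
  -- identity: column sums equal borelCoeff * ζ^n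
  have E : ∀ n : ℕ, (∑' k : ℕ, F (k, n)) = borelCoeff s n * ζ ^ n := by
    intro n
    have : ∀ k : ℕ, F (k, n) = ((-ζ) ^ n / (n.factorial : ℂ)) * ((k : ℂ) ^ n * w ^ k) := by
      intro k; simp only [hF]; ring
    rw [tsum_congr this, tsum_mul_left, borelCoeff, neg_pow]
    ring
  -- outer summability of norms of column sums
  have hout : Summable (fun n : ℕ => ∑' k : ℕ, ‖F (k, n)‖) := by
    have := (summable_prod_of_nonneg (f := fun p : ℕ × ℕ => ‖F (p.2, p.1)‖)
      (fun p => norm_nonneg _)).1 (hGsum.prod_symm.congr fun p => rfl)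
    exact this.2
  have hsummable : Summable (fun n : ℕ => borelCoeff s n * ζ ^ n) := by
    refine Summable.of_norm_bounded hout fun n => ?_
    rw [← E n]
    exact norm_tsum_le_tsum_norm (hGsum.prod_symm.prod_factor n)
  have hnormsum : Summable (fun n : ℕ => ‖borelCoeff s n * ζ ^ n‖) := by
    refine Summable.of_nonneg_of_le (fun n => norm_nonneg _) (fun n => ?_) hout
    rw [← E n]
    exact norm_tsum_le_tsum_norm (hGsum.prod_symm.prod_factor n)
  refine ⟨hnormsum, (Summable.hasSum_iff hsummable).2 ?_⟩
  -- compute the sum by Fubini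
  have hrow : ∀ k : ℕ, (∑' n : ℕ, F (k, n)) = Complex.exp (s - ζ) ^ k := by
    intro k
    have h1 : ∀ n : ℕ, F (k, n) = w ^ k * (((k : ℂ) * (-ζ)) ^ n / (n.factorial : ℂ)) := by
      intro n; simp only [hF, mul_pow]; ring
    rw [tsum_congr h1, tsum_mul_left,
      show (∑' n : ℕ, ((k : ℂ) * (-ζ)) ^ n / (n.factorial : ℂ)) = Complex.exp ((k : ℂ) * (-ζ))
        by rw [Complex.exp_eq_exp_ℂ, NormedSpace.exp_eq_tsum_div],
      Complex.exp_nat_mul, ← mul_pow, ← Complex.exp_add, ← sub_eq_add_neg]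
  have hgeo : ‖Complex.exp (s - ζ)‖ < 1 := by
    refine norm_exp_lt_one ?_
    have : -ζ.re ≤ ‖ζ‖ := by
      have := Complex.abs_re_le_norm ζ
      linarith [neg_abs_le ζ.re]
    simp only [Complex.sub_re]
    linarith
  calc ∑' n : ℕ, borelCoeff s n * ζ ^ n
      = ∑' (n : ℕ) (k : ℕ), F (k, n) := by rw [tsum_congr fun n => (E n).symm]
    _ = ∑' (k : ℕ) (n : ℕ), F (k, n) := by
        refine Summable.tsum_comm' hFsum ?_ ?_
        · exact fun k => hFsum.prod_factor k
        · exact hcol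
    _ = ∑' k : ℕ, Complex.exp (s - ζ) ^ k := tsum_congr hrow
    _ = (1 - Complex.exp (s - ζ))⁻¹ := tsum_geometric_of_norm_lt_one hgeo


lemma twoPiIZ_eq : twoPiIZ = Complex.exp ⁻¹' {1} := by
  ext z
  simp only [twoPiIZ, Set.mem_range, Set.mem_preimage, Set.mem_singleton_iff,
    Complex.exp_eq_one_iff]
  constructor
  · rintro ⟨m, rfl⟩; exact ⟨m, by push_cast; ring⟩
  · rintro ⟨m, rfl⟩; exact ⟨m, by push_cast; ring⟩

lemma twoPiIZ_closed : IsClosed twoPiIZ := by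
  rw [twoPiIZ_eq]; exact isClosed_singleton.preimage Complex.continuous_exp

lemma twoPiIZ_nonempty : twoPiIZ.Nonempty := ⟨0, ⟨0, by simp⟩⟩

lemma exp_eq_one_of_mem {y : ℂ} (hy : y ∈ twoPiIZ) : Complex.exp y = 1 := by
  rw [twoPiIZ_eq] at hy; exact hy

lemma dpos {s : ℂ} (hs : s.re < 0) : 0 < Metric.infDist s twoPiIZ := by
  rw [← (twoPiIZ_closed.notMem_iff_infDist_pos twoPiIZ_nonempty)]
  rintro ⟨m, hm⟩
  have : s.re = 0 := by
    rw [← hm]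
    simp [Complex.mul_re, Complex.mul_im]
  linarith

lemma denom_ne_zero {s : ℂ} {ζ : ℂ} (hζ : ‖ζ‖ < Metric.infDist s twoPiIZ) :
    1 - Complex.exp (s - ζ) ≠ 0 := by
  intro h
  have h1 : Complex.exp (s - ζ) = 1 := by linear_combination -h
  obtain ⟨m, hm⟩ := Complex.exp_eq_one_iff.1 h1
  have hmem : s - ζ ∈ twoPiIZ := ⟨m, by rw [hm]; push_cast; ring⟩
  have := Metric.infDist_le_dist_of_mem (x := s) hmem
  rw [dist_eq_norm, sub_sub_cancel] at this
  linarith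
noncomputable def borelSeries (s : ℂ) : FormalMultilinearSeries ℂ ℂ ℂ :=
  fun n => ContinuousMultilinearMap.mkPiRing ℂ (Fin n) (borelCoeff s n)

lemma borelSeries_apply (s : ℂ) (n : ℕ) (y : ℂ) :
    (borelSeries s n fun _ => y) = borelCoeff s n * y ^ n := by
  simp [borelSeries, ContinuousMultilinearMap.mkPiRing_apply, smul_eq_mul]
  ring

lemma borelSeries_norm (s : ℂ) (n : ℕ) : ‖borelSeries s n‖ = ‖borelCoeff s n‖ :=
  ContinuousMultilinearMap.norm_mkPiRing _

lemma borelSeries_coeff (s : ℂ) (n : ℕ) : (borelSeries s).coeff n = borelCoeff s n := by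
  simp [FormalMultilinearSeries.coeff, borelSeries, ContinuousMultilinearMap.mkPiRing_apply]


noncomputable def fF (s : ℂ) : ℂ → ℂ := fun z => (1 - Complex.exp (s - z))⁻¹

lemma hasFPowerSeriesAt_borel {s : ℂ} (hs : s.re < 0) :
    HasFPowerSeriesAt (fF s) (borelSeries s) 0 := by
  have h0 : (0 : ℝ) < -s.re / 2 := by linarith
  refine ⟨ENNReal.ofReal (-s.re / 2), ?_, ?_, ?_⟩
  · have hζ : s.re + ‖((-s.re / 2 : ℝ) : ℂ)‖ < 0 := by
      rw [Complex.norm_real, Real.norm_eq_abs, _root_.abs_of_nonneg h0.le]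
      linarith
    have hsum := (key hs hζ).1
    have hle := FormalMultilinearSeries.le_radius_of_summable_norm (borelSeries s)
      (r := (-s.re / 2).toNNReal) (by
        refine hsum.congr fun n => ?_
        rw [norm_mul, norm_pow, Complex.norm_real, Real.norm_eq_abs,
          _root_.abs_of_nonneg h0.le, borelSeries_norm, Real.coe_toNNReal _ h0.le])
    rwa [ENNReal.ofReal] 
  · exact ENNReal.ofReal_pos.2 h0
  · intro y hy
    rw [Metric.emetric_ball, mem_ball_zero_iff] at hy
    have hζ : s.re + ‖y‖ < 0 := by linarith
    have := (key hs hζ).2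
    simpa [borelSeries_coeff, fF, zero_add, mul_comm] using this

lemma hasSum_on_disc {s : ℂ} (hs : s.re < 0) {ζ : ℂ} (hζ : ‖ζ‖ < Metric.infDist s twoPiIZ) :
    HasSum (fun n : ℕ => borelCoeff s n * ζ ^ n) ((1 - Complex.exp (s - ζ))⁻¹) := by
  have hd := dpos hs
  set d := Metric.infDist s twoPiIZ with hdd
  set R : ℝ := (‖ζ‖ + d) / 2 with hRdef
  have hR1 : ‖ζ‖ < R := by rw [hRdef]; linarith
  have hR2 : R < d := by rw [hRdef]; linarith
  have hR0 : 0 < R := lt_of_le_of_lt (norm_nonneg ζ) hR1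
  have hdiff : DifferentiableOn ℂ (fF s) (Metric.closedBall 0 (R.toNNReal : ℝ)) := by
    intro z hz
    rw [Metric.mem_closedBall, dist_zero_right, Real.coe_toNNReal _ hR0.le] at hz
    refine DifferentiableAt.differentiableWithinAt ?_
    refine DifferentiableAt.inv ?_ (denom_ne_zero (lt_of_le_of_lt hz hR2))
    exact ((differentiable_const (1 : ℂ)).sub
      (Complex.differentiable_exp.comp ((differentiable_const s).sub differentiable_id))) z
  have hq := hdiff.hasFPowerSeriesOnBall (Real.toNNReal_pos.2 hR0)
  have hpq : borelSeries s = cauchyPowerSeries (fF s) 0 R.toNNReal :=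
    (hasFPowerSeriesAt_borel hs).eq_formalMultilinearSeries hq.hasFPowerSeriesAt
  have hball : HasFPowerSeriesOnBall (fF s) (borelSeries s) 0 R.toNNReal := hpq ▸ hq
  have hmem : ζ ∈ Metric.eball (0 : ℂ) R.toNNReal := by
    rw [Metric.emetric_ball_nnreal, mem_ball_zero_iff, Real.coe_toNNReal _ hR0.le]
    exact hR1
  have := hball.hasSum hmem
  simpa [borelSeries_coeff, fF, zero_add, mul_comm] using this

lemma not_summable_outside {s : ℂ} (hs : s.re < 0) {ζ : ℂ}
    (hζ : Metric.infDist s twoPiIZ < ‖ζ‖)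
    (h : Summable fun n : ℕ => borelCoeff s n * ζ ^ n) : False := by
  have hd := dpos hs
  have htend : Tendsto (fun n : ℕ => ‖borelSeries s n‖ * ((‖ζ‖.toNNReal : ℝ)) ^ n)
      atTop (𝓝 0) := by
    have h0 := h.tendsto_atTop_zero.norm
    simp only [norm_zero] at h0
    refine h0.congr fun n => ?_
    rw [norm_mul, norm_pow, borelSeries_norm, Real.coe_toNNReal _ (norm_nonneg ζ)]
  have hrad : (‖ζ‖.toNNReal : ℝ≥0∞) ≤ (borelSeries s).radius :=
    (borelSeries s).le_radius_of_tendsto htend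
  obtain ⟨y, hymem, hyd⟩ := twoPiIZ_closed.exists_infDist_eq_dist twoPiIZ_nonempty s
  set ζs : ℂ := s - y with hζs
  have hnorm : ‖ζs‖ = Metric.infDist s twoPiIZ := by rw [hζs, ← dist_eq_norm, hyd]
  have hmem : ζs ∈ Metric.eball (0 : ℂ) (borelSeries s).radius := by
    rw [Metric.mem_eball, edist_dist, dist_zero_right, hnorm]
    calc ENNReal.ofReal (Metric.infDist s twoPiIZ)
        < ENNReal.ofReal ‖ζ‖ := (ENNReal.ofReal_lt_ofReal_iff (hd.trans hζ)).2 hζ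
      _ = (‖ζ‖.toNNReal : ℝ≥0∞) := rfl
      _ ≤ _ := hrad
  have hcont : ContinuousAt (borelSeries s).sum ζs :=
    (FormalMultilinearSeries.continuousOn (p := borelSeries s)).continuousAt (Metric.isOpen_eball.mem_nhds hmem)
  have hsumeq : ∀ z : ℂ, ‖z‖ < Metric.infDist s twoPiIZ →
      (borelSeries s).sum z = (1 - Complex.exp (s - z))⁻¹ := by
    intro z hz
    have h2 : HasSum (fun n : ℕ => borelSeries s n fun _ => z)
        ((1 - Complex.exp (s - z))⁻¹) := by
      have := hasSum_on_disc hs hz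
      refine this.congr_fun fun n => ?_
      rw [borelSeries_apply]
    exact h2.tsum_eq
  haveI : (𝓝[Metric.ball (0 : ℂ) (Metric.infDist s twoPiIZ)] ζs).NeBot := by
    refine mem_closure_iff_nhdsWithin_neBot.1 ?_
    rw [closure_ball (0 : ℂ) hd.ne']
    rw [Metric.mem_closedBall, dist_zero_right, hnorm]
  have hcont2 : Continuous fun z : ℂ => 1 - Complex.exp (s - z) := by continuity
  have h1 : Tendsto (fun z : ℂ => (1 - Complex.exp (s - z)) * (borelSeries s).sum z)
      (𝓝[Metric.ball (0 : ℂ) (Metric.infDist s twoPiIZ)] ζs)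
      (𝓝 ((1 - Complex.exp (s - ζs)) * (borelSeries s).sum ζs)) :=
    ((hcont2.tendsto ζs).mul hcont).mono_left nhdsWithin_le_nhds
  have hval : 1 - Complex.exp (s - ζs) = 0 := by
    rw [hζs, sub_sub_cancel, exp_eq_one_of_mem hymem, sub_self]
  rw [hval, zero_mul] at h1
  have h2 : Tendsto (fun z : ℂ => (1 - Complex.exp (s - z)) * (borelSeries s).sum z)
      (𝓝[Metric.ball (0 : ℂ) (Metric.infDist s twoPiIZ)] ζs) (𝓝 1) := by
    refine Tendsto.congr' ?_ tendsto_const_nhds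
    refine eventually_nhdsWithin_of_forall fun z hz => ?_
    rw [mem_ball_zero_iff] at hz
    dsimp only
    rw [hsumeq z hz, mul_inv_cancel₀ (denom_ne_zero hz)]
  exact zero_ne_one (tendsto_nhds_unique h1 h2)

/-- Poincaré's example: for `Re s < 0` and `w = e^s`, the numbers `bₙ = Σ_k kⁿ wᵏ` are
well defined, `d = dist(s, 2πiℤ) > 0`, the Borel transform `Σ (-1)ⁿ bₙ ζⁿ/n!` has radius
of convergence exactly `d`, and its sum is `1/(1 − e^{s−ζ})` on `|ζ| < d`. -/
theorem stmt_9 (s : ℂ) (hs : s.re < 0) :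
    (∀ n : ℕ, Summable (fun k : ℕ => ‖(k : ℂ) ^ n * Complex.exp s ^ k‖)) ∧
      0 < Metric.infDist s twoPiIZ ∧
      (∀ ζ : ℂ, ‖ζ‖ < Metric.infDist s twoPiIZ →
        Summable (fun n : ℕ =>
          (-1 : ℂ) ^ n * (∑' k : ℕ, (k : ℂ) ^ n * Complex.exp s ^ k) * ζ ^ n /
            (Nat.factorial n : ℂ))) ∧
      (∀ ζ : ℂ, Metric.infDist s twoPiIZ < ‖ζ‖ →
        ¬ Summable (fun n : ℕ =>
          (-1 : ℂ) ^ n * (∑' k : ℕ, (k : ℂ) ^ n * Complex.exp s ^ k) * ζ ^ n /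
            (Nat.factorial n : ℂ))) ∧
      ∀ ζ : ℂ, ‖ζ‖ < Metric.infDist s twoPiIZ →
        (∑' n : ℕ,
            (-1 : ℂ) ^ n * (∑' k : ℕ, (k : ℂ) ^ n * Complex.exp s ^ k) * ζ ^ n /
              (Nat.factorial n : ℂ)) =
          1 / (1 - Complex.exp (s - ζ)) := by
  have hterm : ∀ (ζ : ℂ) (n : ℕ),
      (-1 : ℂ) ^ n * (∑' k : ℕ, (k : ℂ) ^ n * Complex.exp s ^ k) * ζ ^ n /
        (Nat.factorial n : ℂ) = borelCoeff s n * ζ ^ n := by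
    intro ζ n; rw [borelCoeff]; ring
  refine ⟨summable_bn hs, dpos hs, ?_, ?_, ?_⟩
  · intro ζ hζ
    exact ((hasSum_on_disc hs hζ).summable).congr fun n => (hterm ζ n).symm
  · intro ζ hζ hsum
    exact not_summable_outside hs hζ (hsum.congr fun n => hterm ζ n)
  · intro ζ hζ
    rw [tsum_congr (hterm ζ), (hasSum_on_disc hs hζ).tsum_eq, one_div]
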